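/- Let h be an n-dimensional Leibniz algebra with universal algebra A(h) = k[X_{ij}]/J. Then the comultiplication Δ(x_{ij}) = Σ_s x_{is} ⊗ x_{sj} and counit ε(x_{ij}) = δ_{ij} are well-defined on A(h) (i.e., the bialgebra structure of the matrix bialgebra M(n) = k[X_{ij}] descends to the quotient), making A(h) a commutative bialgebra and the projection π : M(n) → A(h) a bialgebra homomorphism. -/

import Mathlib

open TensorProduct MvPolynomial

/-- The universal polynomial `P_{(a,i,j)} = Σ_u β^u_{ij} X_{au} - Σ_{s,t} τ^a_{st} X_{si} X_{tj}`. -/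
noncomputable def univPoly {k : Type*} [Field k] {n : ℕ} {I : Type*}
    (τ : Fin n → Fin n → Fin n → k) (β : I → I → I →₀ k)
    (a : Fin n) (i j : I) : MvPolynomial (Fin n × I) k :=
  (β i j).sum (fun u c => C c * X (a, u)) -
    ∑ s : Fin n, ∑ t : Fin n, C (τ s t a) * X (s, i) * X (t, j)

/-- The ideal generated by the universal polynomials. -/
noncomputable def univIdeal {k : Type*} [Field k] {n : ℕ} {I : Type*}
    (τ : Fin n → Fin n → Fin n → k) (β : I → I → I →₀ k) :
    Ideal (MvPolynomial (Fin n × I) k) :=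
  Ideal.span (Set.range fun p : Fin n × I × I => univPoly τ β p.1 p.2.1 p.2.2)

/-- The universal algebra `A(h,g)`. -/
noncomputable abbrev univAlg {k : Type*} [Field k] {n : ℕ} {I : Type*}
    (τ : Fin n → Fin n → Fin n → k) (β : I → I → I →₀ k) :=
  MvPolynomial (Fin n × I) k ⧸ univIdeal τ β

/-- The generator `x_{si}` of `A(h,g)`. -/
noncomputable def univGen {k : Type*} [Field k] {n : ℕ} {I : Type*}
    (τ : Fin n → Fin n → Fin n → k) (β : I → I → I →₀ k)
    (s : Fin n) (i : I) : univAlg τ β :=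
  Ideal.Quotient.mk (univIdeal τ β) (X (s, i))

/-- The universal ideal of a single `n`-dimensional Leibniz algebra `h`
(with structure constants `τ`), inside `M(n) = k[X_{ij}]`. -/
noncomputable abbrev univIdealH {k : Type*} [Field k] {n : ℕ}
    (τ : Fin n → Fin n → Fin n → k) : Ideal (MvPolynomial (Fin n × Fin n) k) :=
  univIdeal τ (fun i j => Finsupp.equivFunOnFinite.symm (τ i j))

/-- The universal algebra `A(h) = A(h,h)` of an `n`-dimensional Leibniz algebra. -/
noncomputable abbrev univAlgH {k : Type*} [Field k] {n : ℕ}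
    (τ : Fin n → Fin n → Fin n → k) :=
  univAlg τ (fun i j => Finsupp.equivFunOnFinite.symm (τ i j))

/-- The generator `x_{ij}` of `A(h)`. -/
noncomputable abbrev univGenH {k : Type*} [Field k] {n : ℕ}
    (τ : Fin n → Fin n → Fin n → k) (i j : Fin n) : univAlgH τ :=
  univGen τ (fun i j => Finsupp.equivFunOnFinite.symm (τ i j)) i j

/-- The comultiplication of the matrix bialgebra `M(n) = k[X_{ij}]`:
`Δ(X_{ij}) = Σ_s X_{is} ⊗ X_{sj}`. -/
noncomputable def deltaM (k : Type*) [Field k] (n : ℕ) :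
    MvPolynomial (Fin n × Fin n) k →ₐ[k]
      MvPolynomial (Fin n × Fin n) k ⊗[k] MvPolynomial (Fin n × Fin n) k :=
  MvPolynomial.aeval (fun p : Fin n × Fin n =>
    ∑ s : Fin n, MvPolynomial.X (p.1, s) ⊗ₜ[k] MvPolynomial.X (s, p.2))

/-- The counit of the matrix bialgebra `M(n)`: `ε(X_{ij}) = δ_{ij}`. -/
noncomputable def epsM (k : Type*) [Field k] (n : ℕ) :
    MvPolynomial (Fin n × Fin n) k →ₐ[k] k :=
  MvPolynomial.aeval (fun p : Fin n × Fin n => if p.1 = p.2 then 1 else 0)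

section Aux
variable {k : Type*} [Field k] {n : ℕ} (τ : Fin n → Fin n → Fin n → k)

lemma univPolyH_eq (a i j : Fin n) :
    univPoly τ (fun i j => Finsupp.equivFunOnFinite.symm (τ i j)) a i j =
      ∑ u : Fin n, C (τ i j u) * X (a, u) -
        ∑ s : Fin n, ∑ t : Fin n, C (τ s t a) * X (s, i) * X (t, j) := by
  unfold univPoly
  congr 1
  rw [Finsupp.sum_fintype]
  · simp
  · intro u; simp

lemma eps_univPolyH (a i j : Fin n) :
    epsM k n (univPoly τ (fun i j => Finsupp.equivFunOnFinite.symm (τ i j)) a i j) = 0 := by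
  rw [univPolyH_eq]
  simp [epsM, mul_ite, ite_and, Finset.sum_ite_eq, Finset.sum_ite_eq']

end Aux

section Aux2
variable {k : Type*} [Field k] {n : ℕ} (τ : Fin n → Fin n → Fin n → k)

private lemma sum3_rot {M : Type*} [AddCommMonoid M] (f : Fin n → Fin n → Fin n → M) :
    ∑ a : Fin n, ∑ b : Fin n, ∑ c : Fin n, f a b c
      = ∑ b : Fin n, ∑ c : Fin n, ∑ a : Fin n, f a b c := by
  rw [Finset.sum_comm]
  exact Finset.sum_congr rfl fun b _ => Finset.sum_comm

private lemma sum4_rot {M : Type*} [AddCommMonoid M] (f : Fin n → Fin n → Fin n → Fin n → M) :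
    ∑ a : Fin n, ∑ b : Fin n, ∑ c : Fin n, ∑ d : Fin n, f a b c d
      = ∑ b : Fin n, ∑ c : Fin n, ∑ d : Fin n, ∑ a : Fin n, f a b c d := by
  rw [Finset.sum_comm]
  exact Finset.sum_congr rfl fun b _ => sum3_rot _

lemma delta_univPolyH (a i j : Fin n) :
    deltaM k n (univPoly τ (fun i j => Finsupp.equivFunOnFinite.symm (τ i j)) a i j) =
      ∑ s : Fin n, X (a, s) ⊗ₜ[k]
          univPoly τ (fun i j => Finsupp.equivFunOnFinite.symm (τ i j)) s i j +
      ∑ p : Fin n, ∑ q : Fin n,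
        univPoly τ (fun i j => Finsupp.equivFunOnFinite.symm (τ i j)) a p q ⊗ₜ[k]
          (X (p, i) * X (q, j)) := by
  simp only [univPolyH_eq, deltaM, map_sub, map_sum, map_smul, map_mul, aeval_X,
    ← MvPolynomial.smul_eq_C_mul, Finset.smul_sum, Finset.sum_mul,
    Finset.mul_sum, Algebra.TensorProduct.tmul_mul_tmul, TensorProduct.sub_tmul,
    TensorProduct.tmul_sub, TensorProduct.sum_tmul, TensorProduct.tmul_sum,
    ← TensorProduct.smul_tmul', TensorProduct.tmul_smul, smul_smul, one_mul, mul_one,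
    smul_mul_assoc, mul_smul_comm, Finset.sum_sub_distrib]
  have h1 : (∑ s : Fin n, ∑ u : Fin n, τ i j u •
        (X (a, s) ⊗ₜ[k] X (s, u) : MvPolynomial (Fin n × Fin n) k ⊗[k] MvPolynomial (Fin n × Fin n) k))
      = ∑ u : Fin n, ∑ s : Fin n, τ i j u • (X (a, s) ⊗ₜ[k] X (s, u)) :=
    Finset.sum_comm
  have h2 : (∑ u : Fin n, ∑ s : Fin n, ∑ t : Fin n, τ s t u •
        (X (a, u) ⊗ₜ[k] (X (s, i) * X (t, j)) : MvPolynomial (Fin n × Fin n) k ⊗[k] MvPolynomial (Fin n × Fin n) k))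
      = ∑ s : Fin n, ∑ t : Fin n, ∑ u : Fin n, τ s t u •
        (X (a, u) ⊗ₜ[k] (X (s, i) * X (t, j))) := sum3_rot _
  have h3 : (∑ p : Fin n, ∑ q : Fin n, ∑ s : Fin n, ∑ t : Fin n, τ s t a •
        ((X (s, p) * X (t, q)) ⊗ₜ[k] (X (p, i) * X (q, j)) : MvPolynomial (Fin n × Fin n) k ⊗[k] MvPolynomial (Fin n × Fin n) k))
      = ∑ s : Fin n, ∑ t : Fin n, ∑ q : Fin n, ∑ p : Fin n, τ s t a •
        ((X (s, p) * X (t, q)) ⊗ₜ[k] (X (p, i) * X (q, j))) := by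
    conv_rhs => rw [sum4_rot]
    conv_rhs => rw [sum4_rot]
    exact Finset.sum_comm
  rw [h1, h2, h3]
  abel
end Aux2

set_option synthInstance.maxHeartbeats 400000 in
set_option maxHeartbeats 1000000 in
/-- the bialgebra structure of `M(n)` descends to the quotient
`A(h) = M(n)/J`: `Δ(J) ⊆ J ⊗ M(n) + M(n) ⊗ J`, `ε(J) = 0`, and there exist algebra
maps `Δ_A, ε_A` on `A(h)` with `Δ(x_{ij}) = Σ_s x_{is} ⊗ x_{sj}`, `ε(x_{ij}) = δ_{ij}`
making `A(h)` a commutative bialgebra (coassociative and counital) and the projection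
`π : M(n) → A(h)` a bialgebra homomorphism. -/
theorem stmt_12 (k : Type*) [Field k] (n : ℕ) (τ : Fin n → Fin n → Fin n → k) :
    (∀ p ∈ univIdealH τ, deltaM k n p ∈
        Ideal.map (Algebra.TensorProduct.includeLeft :
          MvPolynomial (Fin n × Fin n) k →ₐ[k] _) (univIdealH τ) ⊔
        Ideal.map (Algebra.TensorProduct.includeRight :
          MvPolynomial (Fin n × Fin n) k →ₐ[k] _) (univIdealH τ)) ∧
    (∀ p ∈ univIdealH τ, epsM k n p = 0) ∧
    ∃ (ΔA : univAlgH τ →ₐ[k] univAlgH τ ⊗[k] univAlgH τ) (εA : univAlgH τ →ₐ[k] k),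
      (∀ i j : Fin n, ΔA (univGenH τ i j) =
        ∑ s : Fin n, univGenH τ i s ⊗ₜ[k] univGenH τ s j) ∧
      (∀ i j : Fin n, εA (univGenH τ i j) = if i = j then 1 else 0) ∧
      (ΔA.comp (Ideal.Quotient.mkₐ k (univIdealH τ)) =
        (Algebra.TensorProduct.map (Ideal.Quotient.mkₐ k (univIdealH τ))
          (Ideal.Quotient.mkₐ k (univIdealH τ))).comp (deltaM k n)) ∧
      (εA.comp (Ideal.Quotient.mkₐ k (univIdealH τ)) = epsM k n) ∧
      (∀ a : univAlgH τ,
        (TensorProduct.assoc k (univAlgH τ) (univAlgH τ) (univAlgH τ))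
            ((TensorProduct.map ΔA.toLinearMap LinearMap.id) (ΔA a)) =
          (TensorProduct.map LinearMap.id ΔA.toLinearMap) (ΔA a)) ∧
      (∀ a : univAlgH τ,
        (TensorProduct.lid k (univAlgH τ))
          ((TensorProduct.map εA.toLinearMap LinearMap.id) (ΔA a)) = a) ∧
      (∀ a : univAlgH τ,
        (TensorProduct.rid k (univAlgH τ))
          ((TensorProduct.map LinearMap.id εA.toLinearMap) (ΔA a)) = a) := by
  classical
  have hPmem : ∀ a i j : Fin n,
      univPoly τ (fun i j => Finsupp.equivFunOnFinite.symm (τ i j)) a i j ∈ univIdealH τ :=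
    fun a i j => Ideal.subset_span ⟨(a, i, j), rfl⟩
  -- Part 1 : Δ(J) ⊆ J ⊗ M + M ⊗ J
  have part1 : ∀ p ∈ univIdealH τ, deltaM k n p ∈
      Ideal.map (Algebra.TensorProduct.includeLeft :
        MvPolynomial (Fin n × Fin n) k →ₐ[k] _) (univIdealH τ) ⊔
      Ideal.map (Algebra.TensorProduct.includeRight :
        MvPolynomial (Fin n × Fin n) k →ₐ[k] _) (univIdealH τ) := by
    intro p hp
    have hle : univIdealH τ ≤ Ideal.comap (deltaM k n)
        (Ideal.map (Algebra.TensorProduct.includeLeft :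
          MvPolynomial (Fin n × Fin n) k →ₐ[k] _) (univIdealH τ) ⊔
         Ideal.map (Algebra.TensorProduct.includeRight :
          MvPolynomial (Fin n × Fin n) k →ₐ[k] _) (univIdealH τ)) := by
      show univIdeal τ _ ≤ _
      rw [univIdeal, Ideal.span_le]
      rintro _ ⟨⟨a, i, j⟩, rfl⟩
      simp only [SetLike.mem_coe, Ideal.mem_comap]
      rw [delta_univPolyH]
      refine add_mem (Ideal.sum_mem _ fun s _ => ?_)
        (Ideal.sum_mem _ fun p _ => Ideal.sum_mem _ fun q _ => ?_)
      · refine Ideal.mem_sup_right ?_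
        have h : (X (a, s) : MvPolynomial (Fin n × Fin n) k) ⊗ₜ[k]
              univPoly τ (fun i j => Finsupp.equivFunOnFinite.symm (τ i j)) s i j
            = (X (a, s) ⊗ₜ[k] (1 : MvPolynomial (Fin n × Fin n) k)) *
              (Algebra.TensorProduct.includeRight :
                MvPolynomial (Fin n × Fin n) k →ₐ[k] _)
                (univPoly τ (fun i j => Finsupp.equivFunOnFinite.symm (τ i j)) s i j) := by
          simp [Algebra.TensorProduct.tmul_mul_tmul]
        rw [h]
        exact Ideal.mul_mem_left _ _ (Ideal.mem_map_of_mem _ (hPmem s i j))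
      · refine Ideal.mem_sup_left ?_
        have h : (univPoly τ (fun i j => Finsupp.equivFunOnFinite.symm (τ i j)) a p q) ⊗ₜ[k]
              ((X (p, i) : MvPolynomial (Fin n × Fin n) k) * X (q, j))
            = (Algebra.TensorProduct.includeLeft :
                MvPolynomial (Fin n × Fin n) k →ₐ[k] _)
                (univPoly τ (fun i j => Finsupp.equivFunOnFinite.symm (τ i j)) a p q) *
              ((1 : MvPolynomial (Fin n × Fin n) k) ⊗ₜ[k] (X (p, i) * X (q, j))) := by
          simp [Algebra.TensorProduct.tmul_mul_tmul]
        rw [h]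
        exact Ideal.mul_mem_right _ _ (Ideal.mem_map_of_mem _ (hPmem a p q))
    exact hle hp
  -- Part 2 : ε(J) = 0
  have part2 : ∀ p ∈ univIdealH τ, epsM k n p = 0 := by
    have hle : univIdealH τ ≤ RingHom.ker (epsM k n) := by
      show univIdeal τ _ ≤ _
      rw [univIdeal, Ideal.span_le]
      rintro _ ⟨⟨a, i, j⟩, rfl⟩
      exact eps_univPolyH τ a i j
    exact fun p hp => hle hp
  refine ⟨part1, part2, ?_⟩
  set mkA := Ideal.Quotient.mkₐ k (univIdealH τ) with hmkA
  -- map mkA ⊗ mkA kills the ideal sup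
  have hmapzero : ∀ p ∈ univIdealH τ,
      ((Algebra.TensorProduct.map mkA mkA).comp (deltaM k n)) p = 0 := by
    intro p hp
    have hsup : Ideal.map (Algebra.TensorProduct.includeLeft :
          MvPolynomial (Fin n × Fin n) k →ₐ[k] _) (univIdealH τ) ⊔
        Ideal.map (Algebra.TensorProduct.includeRight :
          MvPolynomial (Fin n × Fin n) k →ₐ[k] _) (univIdealH τ) ≤
        RingHom.ker (Algebra.TensorProduct.map mkA mkA) := by
      refine sup_le ?_ ?_ <;> rw [Ideal.map_le_iff_le_comap] <;> intro q hq <;>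
        simp [Ideal.mem_comap, RingHom.mem_ker, Algebra.TensorProduct.map_tmul,
          hmkA, Ideal.Quotient.eq_zero_iff_mem.mpr hq]
    exact hsup (part1 p hp)
  set ΔA := Ideal.Quotient.liftₐ (univIdealH τ)
    ((Algebra.TensorProduct.map mkA mkA).comp (deltaM k n)) hmapzero with hΔA
  set εA := Ideal.Quotient.liftₐ (univIdealH τ) (epsM k n) part2 with hεA
  have hΔcomp : ΔA.comp mkA = (Algebra.TensorProduct.map mkA mkA).comp (deltaM k n) :=
    Ideal.Quotient.liftₐ_comp _ _ _
  have hεcomp : εA.comp mkA = epsM k n := Ideal.Quotient.liftₐ_comp _ _ _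
  have hgenmk : ∀ i j : Fin n, univGenH τ i j = mkA (X (i, j)) := fun i j => rfl
  have hgenΔ : ∀ i j : Fin n, ΔA (univGenH τ i j) =
      ∑ s : Fin n, univGenH τ i s ⊗ₜ[k] univGenH τ s j := by
    intro i j
    rw [hgenmk, ← AlgHom.comp_apply, hΔcomp]
    simp only [AlgHom.comp_apply, deltaM, aeval_X, map_sum,
      Algebra.TensorProduct.map_tmul]
    exact Finset.sum_congr rfl fun s _ => by rw [hgenmk i s, hgenmk s j]
  have hgenε : ∀ i j : Fin n, εA (univGenH τ i j) = if i = j then 1 else 0 := by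
    intro i j
    rw [hgenmk, ← AlgHom.comp_apply, hεcomp]
    simp [epsM]
  -- bridges between linear-level and algebra-level tensor maps
  have hbridge1 : TensorProduct.map ΔA.toLinearMap
        (LinearMap.id : univAlgH τ →ₗ[k] univAlgH τ)
      = (Algebra.TensorProduct.map ΔA (AlgHom.id k (univAlgH τ))).toLinearMap :=
    TensorProduct.ext' fun x y => rfl
  have hbridge2 : TensorProduct.map
        (LinearMap.id : univAlgH τ →ₗ[k] univAlgH τ) ΔA.toLinearMap
      = (Algebra.TensorProduct.map (AlgHom.id k (univAlgH τ)) ΔA).toLinearMap :=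
    TensorProduct.ext' fun x y => rfl
  have hbridge3 : TensorProduct.map εA.toLinearMap
        (LinearMap.id : univAlgH τ →ₗ[k] univAlgH τ)
      = (Algebra.TensorProduct.map εA (AlgHom.id k (univAlgH τ))).toLinearMap :=
    TensorProduct.ext' fun x y => rfl
  have hbridge4 : TensorProduct.map
        (LinearMap.id : univAlgH τ →ₗ[k] univAlgH τ) εA.toLinearMap
      = (Algebra.TensorProduct.map (AlgHom.id k (univAlgH τ)) εA).toLinearMap :=
    TensorProduct.ext' fun x y => rfl
  -- coassociativity at the algebra level
  have hLR : (Algebra.TensorProduct.assoc k k k (univAlgH τ) (univAlgH τ)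
        (univAlgH τ)).toAlgHom.comp
        ((Algebra.TensorProduct.map ΔA (AlgHom.id k (univAlgH τ))).comp ΔA) =
      (Algebra.TensorProduct.map (AlgHom.id k (univAlgH τ)) ΔA).comp ΔA := by
    apply Ideal.Quotient.algHom_ext
    apply MvPolynomial.algHom_ext
    rintro ⟨i, j⟩
    simp only [AlgHom.comp_apply, AlgEquiv.toAlgHom_eq_coe, AlgHom.coe_coe]
    rw [← hgenmk i j, hgenΔ]
    simp only [map_sum, Algebra.TensorProduct.map_tmul, AlgHom.coe_id, id_eq, hgenΔ, AlgEquiv.coe_toAlgHom,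
      TensorProduct.sum_tmul, TensorProduct.tmul_sum, Algebra.TensorProduct.assoc_tmul]
    exact Finset.sum_comm
  -- counit identities at the algebra level
  have hLid : (Algebra.TensorProduct.lid k (univAlgH τ)).toAlgHom.comp
        ((Algebra.TensorProduct.map εA (AlgHom.id k (univAlgH τ))).comp ΔA) =
      AlgHom.id k (univAlgH τ) := by
    apply Ideal.Quotient.algHom_ext
    apply MvPolynomial.algHom_ext
    rintro ⟨i, j⟩
    simp only [AlgHom.comp_apply, AlgEquiv.toAlgHom_eq_coe, AlgHom.coe_coe, AlgHom.coe_id, id_eq]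
    rw [← hgenmk i j, hgenΔ]
    simp only [map_sum, Algebra.TensorProduct.map_tmul, AlgHom.coe_id, id_eq, hgenε, AlgEquiv.coe_toAlgHom,
      Algebra.TensorProduct.lid_tmul, ite_smul, one_smul, zero_smul, Finset.sum_ite_eq,
      Finset.mem_univ, if_true]
  have hridpt : ∀ x : univAlgH τ ⊗[k] k, TensorProduct.rid k (univAlgH τ) x
      = Algebra.TensorProduct.rid k k (univAlgH τ) x := fun x => by
    induction x using TensorProduct.induction_on with
    | zero => simp
    | tmul a c => simp
    | add x y hx hy => simp [map_add, hx, hy]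
  have hRid : (Algebra.TensorProduct.rid k k (univAlgH τ)).toAlgHom.comp
        ((Algebra.TensorProduct.map (AlgHom.id k (univAlgH τ)) εA).comp ΔA) =
      AlgHom.id k (univAlgH τ) := by
    apply Ideal.Quotient.algHom_ext
    apply MvPolynomial.algHom_ext
    rintro ⟨i, j⟩
    simp only [AlgHom.comp_apply, AlgEquiv.toAlgHom_eq_coe, AlgHom.coe_coe, AlgHom.coe_id, id_eq]
    rw [← hgenmk i j, hgenΔ]
    simp only [map_sum, Algebra.TensorProduct.map_tmul, AlgHom.coe_id, id_eq, hgenε, AlgEquiv.coe_toAlgHom,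
      Algebra.TensorProduct.rid_tmul, ite_smul, one_smul, zero_smul, Finset.sum_ite_eq',
      Finset.mem_univ, if_true]
  refine ⟨ΔA, εA, hgenΔ, hgenε, hΔcomp, hεcomp, ?_, ?_, ?_⟩
  · intro a
    calc (TensorProduct.assoc k (univAlgH τ) (univAlgH τ) (univAlgH τ))
          ((TensorProduct.map ΔA.toLinearMap LinearMap.id) (ΔA a))
        = (Algebra.TensorProduct.assoc k k k (univAlgH τ) (univAlgH τ) (univAlgH τ))
            ((Algebra.TensorProduct.map ΔA (AlgHom.id k (univAlgH τ))) (ΔA a)) := by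
          rw [hbridge1]; rfl
      _ = (Algebra.TensorProduct.map (AlgHom.id k (univAlgH τ)) ΔA) (ΔA a) :=
          AlgHom.congr_fun hLR a
      _ = (TensorProduct.map LinearMap.id ΔA.toLinearMap) (ΔA a) := by rw [hbridge2]; rfl
  · intro a
    calc (TensorProduct.lid k (univAlgH τ))
          ((TensorProduct.map εA.toLinearMap LinearMap.id) (ΔA a))
        = (Algebra.TensorProduct.lid k (univAlgH τ))
            ((Algebra.TensorProduct.map εA (AlgHom.id k (univAlgH τ))) (ΔA a)) := by
          rw [hbridge3]; rfl
      _ = a := AlgHom.congr_fun hLid a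
  · intro a
    calc (TensorProduct.rid k (univAlgH τ))
          ((TensorProduct.map LinearMap.id εA.toLinearMap) (ΔA a))
        = (Algebra.TensorProduct.rid k k (univAlgH τ))
            ((Algebra.TensorProduct.map (AlgHom.id k (univAlgH τ)) εA) (ΔA a)) := by
          rw [hbridge4]; exact hridpt _
      _ = a := AlgHom.congr_fun hRid a
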